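/- Let A be a Hom-finite k-linear abelian category having Auslander-Reiten duality, α : X → Y a right minimal epimorphism with kernel K, and C an object such that α is right C-determined. Then every non-injective indecomposable direct summand K' of K satisfies τ⁻¹K' ∈ add C. -/

import Mathlib

set_option linter.unusedSectionVars false

open CategoryTheory Abelian Limits

universe w v u

attribute [local instance] CategoryTheory.Abelian.hasFiniteBiproducts

variable {A : Type u} [Category.{v} A] [Abelian A]

/-- `M` belongs to `add K`: it is a direct summand of a finite direct sum of copies of `K`. -/
def InAdd (K M : A) : Prop :=
  ∃ (n : ℕ) (s : M ⟶ ⨁ (fun _ : Fin n => K)) (r : (⨁ fun _ : Fin n => K) ⟶ M),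
    s ≫ r = 𝟙 M

/-- `α` factors through `α'`. -/
def Factors {X X' Y : A} (α : X ⟶ Y) (α' : X' ⟶ Y) : Prop :=
  ∃ v : X ⟶ X', v ≫ α' = α

/-- `α` and `α'` are right equivalent. -/
def RightEquiv {X X' Y : A} (α : X ⟶ Y) (α' : X' ⟶ Y) : Prop :=
  Factors α α' ∧ Factors α' α

/-- A morphism is right minimal. -/
def RightMinimal {X Y : A} (α : X ⟶ Y) : Prop :=
  ∀ v : X ⟶ X, v ≫ α = α → IsIso v

/-- A short exact sequence `0 → K → X → Y → 0`. -/
structure SES (K Y : A) where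
  X : A
  i : K ⟶ X
  p : X ⟶ Y
  zero : i ≫ p = 0
  shortExact : (ShortComplex.mk i p zero).ShortExact

variable [HasExt.{w} A]

lemma Ext.mk₀_add' {X Y : A} (f g : X ⟶ Y) :
    Ext.mk₀ (f + g) = Ext.mk₀ f + Ext.mk₀ g := by
  letI := HasDerivedCategory.standard A
  apply Ext.ext
  simp [Ext.add_hom, ShiftedHom.mk₀, Functor.map_add]

/-- The class `[ξ] ∈ Ext¹(Y, K)` of a short exact sequence `ξ`. -/
noncomputable def SES.cls {K Y : A} (E : SES K Y) : Ext Y K 1 :=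
  E.shortExact.extClass

/-- The class `[u.ξ]` of the pushout of `ξ` along `u`. -/
noncomputable def SES.push {K Y Z : A} (E : SES K Y) (u : K ⟶ Z) : Ext Y Z 1 :=
  E.cls.comp (Ext.mk₀ u) (add_zero 1)

noncomputable instance extSMulEnd (Y K : A) : SMul (End K) (Ext Y K 1) :=
  ⟨fun g e => e.comp (Ext.mk₀ g) (add_zero 1)⟩

lemma extSmul_def {Y K : A} (g : End K) (e : Ext Y K 1) :
    g • e = e.comp (Ext.mk₀ g) (add_zero 1) := rfl

/-- `Ext¹(Y, K)` as a left module over `Γ(K) = End K`, via pushout. -/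
noncomputable instance extModuleEnd (Y K : A) : Module (End K) (Ext Y K 1) where
  one_smul e := by rw [extSmul_def]; exact Ext.comp_mk₀_id e
  mul_smul g h e := by
    rw [extSmul_def, extSmul_def, extSmul_def,
      Ext.comp_assoc_of_third_deg_zero, Ext.mk₀_comp_mk₀]
    rfl
  smul_add g e f := by
    rw [extSmul_def, extSmul_def, extSmul_def]; exact Ext.add_comp e f _ _
  add_smul g h e := by
    rw [extSmul_def, extSmul_def, extSmul_def, Ext.mk₀_add', Ext.comp_add]
  zero_smul e := by rw [extSmul_def]; rw [Ext.mk₀_zero, Ext.comp_zero]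
  smul_zero g := by rw [extSmul_def]; exact Ext.zero_comp _ _ _ _ _

/-- The connecting map `c(ξ, K) : Hom(K₁, K) → Ext¹(Y, K)`, `u ↦ [u.ξ]`,
as a morphism of left `Γ(K) = End K`-modules. -/
noncomputable def SES.conn {K₁ Y : A} (E : SES K₁ Y) (K : A) :
    (K₁ ⟶ K) →ₗ[End K] Ext Y K 1 where
  toFun u := E.push u
  map_add' u v := by
    dsimp [SES.push]
    rw [Ext.mk₀_add', Ext.comp_add]
  map_smul' g u := by
    dsimp [SES.push]
    rw [End.smul_right, extSmul_def, Ext.comp_assoc_of_third_deg_zero,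
      Ext.mk₀_comp_mk₀]

/-- Right minimality for a morphism of modules. -/
def ModRightMinimal {R : Type*} [Ring R] {M N : Type*} [AddCommGroup M] [AddCommGroup N]
    [Module R M] [Module R N] (c : M →ₗ[R] N) : Prop :=
  ∀ g : M →ₗ[R] M, c.comp g = c → Function.Bijective g

universe w'

/-- The `R`-module `M` admits a projective cover. -/
def HasProjCover (R : Type*) [Ring R] (M : Type w') [AddCommGroup M] [Module R M] : Prop :=
  ∃ (P : Type w') (_ : AddCommGroup P) (_ : Module R P) (f : P →ₗ[R] M),
    Module.Projective R P ∧ Function.Surjective f ∧ ModRightMinimal f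

/-- `ξ` is a universal `L`-extension of `Y` by `K`. -/
def IsUniversalExt (K : A) {K₁ Y : A} (E : SES K₁ Y) (L : Submodule (End K) (Ext Y K 1)) :
    Prop :=
  InAdd K K₁ ∧ LinearMap.range (E.conn K) = L ∧ ModRightMinimal (E.conn K)

lemma InAdd.self (K : A) : InAdd K K := by
  refine ⟨1, biproduct.ι (fun _ : Fin 1 => K) (0 : Fin 1), biproduct.π (fun _ : Fin 1 => K) 0, ?_⟩
  simp

section AR

variable (k : Type u) [CommRing k] [IsArtinianRing k] [CategoryTheory.Linear k A]

/-- The `k`-submodule of `Hom(C, T)` of projectively trivial morphisms, i.e. those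
factoring through every epimorphism ending at `T`. -/
def PTriv (C T : A) : Submodule k (C ⟶ T) where
  carrier := {f | ∀ ⦃W : A⦄ (g : W ⟶ T), Epi g → ∃ h : C ⟶ W, h ≫ g = f}
  add_mem' := by
    intro f f' hf hf' W g hg
    obtain ⟨h, rfl⟩ := hf g hg
    obtain ⟨h', rfl⟩ := hf' g hg
    exact ⟨h + h', by simp⟩
  zero_mem' := by
    intro W g hg
    exact ⟨0, by simp⟩
  smul_mem' := by
    intro c f hf W g hg
    obtain ⟨h, rfl⟩ := hf g hg
    exact ⟨c • h, by simp⟩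

/-- The stable Hom space `Hom̲(C, T) = Hom(C, T)/𝒫(C, T)`. -/
abbrev StHom (C T : A) := (C ⟶ T) ⧸ (PTriv (A := A) k C T)

variable [HasExt.{w} A]

/-- The `k`-module structure on `Ext¹(T, X)` induced by the `k`-linear structure
of the category, via the algebra map `k → End X` and pushout. -/
noncomputable instance extkMod (T X : A) : Module k (Ext T X 1) :=
  Module.compHom _ (algebraMap k (End X))

lemma kSmul_def (T X : A) (c : k) (e : Ext T X 1) :
    c • e = e.comp (Ext.mk₀ (algebraMap k (End X) c)) (add_zero 1) := rfl

/-- Pullback (contravariant functoriality of `Ext¹(-, X)`) along `t : T ⟶ T'`,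
as a `k`-linear map. -/
noncomputable def pbMap (X : A) {T T' : A} (t : T ⟶ T') :
    Ext T' X 1 →ₗ[k] Ext T X 1 where
  toFun e := (Ext.mk₀ t).comp e (zero_add 1)
  map_add' e e' := by
    rw [Ext.comp_add]
  map_smul' c e := by
    rw [kSmul_def, kSmul_def]
    exact (Ext.comp_assoc _ _ _ (zero_add 1) (add_zero 1) (by omega)).symm

/-- Postcomposition with `t : T ⟶ T'` on stable Hom spaces, as a `k`-linear map. -/
noncomputable def stMap (C : A) {T T' : A} (t : T ⟶ T') :
    StHom (A := A) k C T →ₗ[k] StHom (A := A) k C T' :=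
  Submodule.mapQ _ _ (Linear.rightComp k C t)
    (by
      intro f hf
      intro W g hg
      obtain ⟨h, hh⟩ := hf (pullback.snd g t) inferInstance
      refine ⟨h ≫ pullback.fst g t, ?_⟩
      rw [Category.assoc, pullback.condition, ← Category.assoc, hh]
      rfl)


/-- `α` is right `C`-determined. -/
def RightDetermined (C : A) {X Y : A} (α : X ⟶ Y) : Prop :=
  ∀ ⦃T : A⦄ (t : T ⟶ Y), (∀ φ : C ⟶ T, Factors (φ ≫ t) α) → Factors t α

/-- A short exact sequence `0 → X → E → Z → 0` is an almost split sequence: it is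
non-split, right almost split and left almost split. -/
def IsAlmostSplitSES {X Z : A} (S : SES X Z) : Prop :=
  (¬ ∃ s : Z ⟶ S.X, s ≫ S.p = 𝟙 Z) ∧
  (∀ ⦃W : A⦄ (g : W ⟶ Z), (¬ ∃ s : Z ⟶ W, s ≫ g = 𝟙 Z) → ∃ h : W ⟶ S.X, h ≫ S.p = g) ∧
  (∀ ⦃W : A⦄ (u : X ⟶ W), (¬ ∃ r : W ⟶ X, u ≫ r = 𝟙 X) → ∃ h : S.X ⟶ W, S.i ≫ h = u)

/-- in a Hom-finite `k`-linear abelian category with Auslander-Reiten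
duality (formulated as `D Ext¹(T, X) ≅ Hom̲(τ⁻¹X, T)`, with almost split sequences
`0 → X → E → τ⁻¹X → 0` for every non-injective indecomposable `X`), if `α : X ⟶ Y`
is a right minimal epimorphism with kernel `K` which is right `C`-determined, then
every non-injective indecomposable direct summand `K'` of `K` satisfies
`τ⁻¹K' ∈ add C`. -/
theorem stmt18
    (homfin : ∀ X Y : A, Module.Finite k (X ⟶ Y))
    (Ed : Type u) [AddCommGroup Ed] [Module k Ed]
    (hinj : Module.Injective k Ed)
    (hcog : ∀ (N : Type u) [AddCommGroup N] [Module k N] (x : N), x ≠ 0 →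
      ∃ φ : N →ₗ[k] Ed, φ x ≠ 0)
    (hminimal : ∀ (E' : Type u) [AddCommGroup E'] [Module k E'], Module.Injective k E' →
      (∀ (N : Type u) [AddCommGroup N] [Module k N] (x : N), x ≠ 0 →
        ∃ φ : N →ₗ[k] E', φ x ≠ 0) →
      ∃ ι : Ed →ₗ[k] E', Function.Injective ι)
    (tinv : A → A)
    (Ψ : ∀ (T X : A), ((Ext T X 1) →ₗ[k] Ed) ≃ₗ[k] StHom (A := A) k (tinv X) T)
    (nat : ∀ (X : A) {T T' : A} (t : T ⟶ T') (θ : Ext T X 1 →ₗ[k] Ed),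
      Ψ T' X (θ ∘ₗ pbMap k X t) = stMap k (tinv X) t (Ψ T X θ))
    (ass : ∀ X : A, ¬ Injective X → Indecomposable X →
      ∃ S : SES X (tinv X), IsAlmostSplitSES S)
    {K Y : A} (E : SES K Y) (hrm : RightMinimal E.p)
    (C : A) (hdet : RightDetermined C E.p) :
    ∀ K' : A, ¬ Injective K' → Indecomposable K' →
      (∃ (s : K' ⟶ K) (r : K ⟶ K'), s ≫ r = 𝟙 K') → InAdd C (tinv K') := by
  rintro K' hninj hind ⟨s, r, hsr⟩
  obtain ⟨S, hns, hras, hlas⟩ := ass K' hninj hind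
  haveI : Mono E.i := E.shortExact.mono_f
  haveI : Epi E.p := E.shortExact.epi_g
  haveI : Mono S.i := S.shortExact.mono_f
  haveI : Epi S.p := S.shortExact.epi_g
  -- Step 1: `s ≫ E.i` is not a split mono (uses right minimality of `E.p` and `K' ≠ 0`).
  have hnsm : ¬ ∃ r' : E.X ⟶ K', (s ≫ E.i) ≫ r' = 𝟙 K' := by
    rintro ⟨r', hr'⟩
    have hv : (𝟙 E.X - r' ≫ s ≫ E.i) ≫ E.p = E.p := by
      simp [Preadditive.sub_comp, E.zero]
    have hiso := hrm _ hv
    have h0 : (s ≫ E.i) ≫ (𝟙 E.X - r' ≫ s ≫ E.i) = 0 := by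
      have hr'' : s ≫ E.i ≫ r' = 𝟙 K' := by simpa using hr'
      simp [Preadditive.comp_sub, reassoc_of% hr'']
    have hzero : s ≫ E.i = 0 := by
      rw [← Category.comp_id (s ≫ E.i), ← IsIso.hom_inv_id (𝟙 E.X - r' ≫ s ≫ E.i),
        ← Category.assoc, h0, zero_comp]
    have hid : 𝟙 K' = 0 := by rw [← hr', hzero, zero_comp]
    have hK0 : Limits.IsZero K' := (Limits.IsZero.iff_id_eq_zero K').2 hid
    exact hninj ⟨fun g f _ => ⟨0, hK0.eq_of_tgt _ _⟩⟩
  -- Step 2: left almost split gives `h : S.X ⟶ E.X` with `S.i ≫ h = s ≫ E.i`.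
  obtain ⟨h, hh⟩ := hlas (s ≫ E.i) hnsm
  -- Step 3: define `t : tinv K' ⟶ Y` with `S.p ≫ t = h ≫ E.p`.
  obtain ⟨t, ht⟩ : ∃ t : tinv K' ⟶ Y, S.p ≫ t = h ≫ E.p := by
    refine S.shortExact.exact.desc' (h ≫ E.p) ?_
    rw [← Category.assoc, hh, Category.assoc, E.zero, comp_zero]
  -- Step 4: `t` does not factor through `E.p` (uses non-splitness of the AR sequence).
  have hnt : ¬ Factors t E.p := by
    rintro ⟨v, hv⟩
    have hk : (h - S.p ≫ v) ≫ E.p = 0 := by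
      simp [Preadditive.sub_comp, hv, ht]
    obtain ⟨w, hw⟩ := E.shortExact.exact.lift' _ hk
    have h1 : (S.i ≫ w) ≫ E.i = s ≫ E.i := by
      rw [Category.assoc, hw, Preadditive.comp_sub, hh, ← Category.assoc, S.zero, zero_comp, sub_zero]
    have h2 : S.i ≫ w = s := (cancel_mono E.i).1 h1
    have hq : S.i ≫ w ≫ r = 𝟙 K' := by rw [← Category.assoc, h2, hsr]
    have hm : S.i ≫ (𝟙 S.X - (w ≫ r) ≫ S.i) = 0 := by
      simp [Preadditive.comp_sub, reassoc_of% hq]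
    obtain ⟨σ, hσ⟩ := S.shortExact.exact.desc' _ hm
    refine hns ⟨σ, ?_⟩
    have : S.p ≫ σ ≫ S.p = S.p ≫ 𝟙 _ := by
      rw [← Category.assoc, hσ]
      simp [Preadditive.sub_comp, S.zero]
    exact (cancel_epi S.p).1 this
  -- Step 5: right C-determinedness gives `φ : C ⟶ tinv K'` with `φ ≫ t` not factoring.
  have hex : ¬ ∀ φ : C ⟶ tinv K', Factors (φ ≫ t) E.p := fun hall => hnt (hdet t hall)
  push_neg at hex
  obtain ⟨φ, hφ⟩ := hex
  -- Step 6: `φ` must be a retraction (right almost split), so `tinv K'` is a summand of `C`.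
  have hret : ∃ σ : tinv K' ⟶ C, σ ≫ φ = 𝟙 (tinv K') := by
    by_contra hc
    obtain ⟨h', hh'⟩ := hras φ hc
    exact hφ ⟨h' ≫ h, by rw [Category.assoc, ← ht, ← Category.assoc, hh']⟩
  obtain ⟨σ, hσ⟩ := hret
  refine ⟨1, σ ≫ biproduct.ι (fun _ : Fin 1 => C) 0, biproduct.π (fun _ : Fin 1 => C) 0 ≫ φ, ?_⟩
  simp [reassoc_of% hσ, hσ]

end AR
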